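/- There exists a constant C > 0 such that for every real number A ≥ 1 and every C¹ function h : (−1, 1) → ℂ one has A·∫_{−1}^{1} |h(x)|² dx ≤ C·∫_{−1}^{1} (|h'(x)|² + A²·x²·|h(x)|²) dx, the inequality being trivially valid when the right-hand side is infinite. The constant C is independent of A and of h. -/

import Mathlib

open MeasureTheory Set
open scoped ENNReal

lemma cs_aux {a b : ℝ} (hab : a ≤ b) {f : ℝ → ℝ}
    (hf : ContinuousOn f (Icc a b)) (hm : Measurable f) (hnn : ∀ t, 0 ≤ f t) :
    (∫ t in a..b, f t) ^ 2 ≤ (b - a) * ∫ t in a..b, f t ^ 2 := by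
  rw [intervalIntegral.integral_of_le hab, intervalIntegral.integral_of_le hab]
  set μ := volume.restrict (Ioc a b) with hμ
  have hμuniv : μ Set.univ = ENNReal.ofReal (b - a) := by
    rw [hμ, Measure.restrict_apply_univ, Real.volume_Ioc]
  haveI : IsFiniteMeasure μ := ⟨by rw [hμuniv]; exact ENNReal.ofReal_lt_top⟩
  have hint2 : Integrable (fun t => f t ^ 2) μ := by
    have : IntegrableOn (fun t => f t ^ 2) (Icc a b) := (hf.pow 2).integrableOn_Icc
    exact this.mono_set Ioc_subset_Icc_self
  have hmem : MemLp f (ENNReal.ofReal 2) μ := by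
    rw [show ENNReal.ofReal 2 = 2 by norm_num]
    exact (memLp_two_iff_integrable_sq hm.aestronglyMeasurable.restrict).2 hint2
  have hmem1 : MemLp (fun _ : ℝ => (1 : ℝ)) (ENNReal.ofReal 2) μ := memLp_const 1
  have hpq : Real.HolderConjugate 2 2 := by constructor <;> norm_num
  have H := integral_mul_le_Lp_mul_Lq_of_nonneg (μ := μ) hpq
    (Filter.Eventually.of_forall hnn) (Filter.Eventually.of_forall fun _ => zero_le_one)
    hmem hmem1
  simp only [mul_one, Real.rpow_two, one_pow] at H
  have h1 : ∫ _t, (1 : ℝ) ∂μ = b - a := by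
    simp [measureReal_def, hμuniv, ENNReal.toReal_ofReal (sub_nonneg.2 hab)]
  rw [h1] at H
  have hI0 : 0 ≤ ∫ t, f t ∂μ := integral_nonneg hnn
  have hI2 : 0 ≤ ∫ t, f t ^ 2 ∂μ := integral_nonneg fun t => sq_nonneg _
  have hba : 0 ≤ b - a := sub_nonneg.2 hab
  calc (∫ t, f t ∂μ) ^ 2 ≤ ((∫ t, f t ^ 2 ∂μ) ^ (1/(2:ℝ)) * (b - a) ^ (1/(2:ℝ))) ^ 2 := by
        apply pow_le_pow_left₀ hI0 H 2
    _ = (b - a) * ∫ t, f t ^ 2 ∂μ := by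
        rw [mul_pow, ← Real.rpow_natCast ((∫ t, f t ^ 2 ∂μ) ^ (1/(2:ℝ))) 2,
          ← Real.rpow_natCast ((b-a) ^ (1/(2:ℝ))) 2, ← Real.rpow_mul hI2, ← Real.rpow_mul hba]
        norm_num
        ring


lemma arith_aux {p i d : ℝ} (hd : d ≠ 0) :
    (d^2)⁻¹ * (((2/d^3)*p + 6*d*i) * (2*d)) = 4*(((d^2)⁻¹)^2*p) + 12*i := by
  field_simp
  ring

set_option maxHeartbeats 2000000 in
lemma core {A : ℝ} (hA : 9 ≤ A) (h : ℝ → ℂ) (hh : ContDiffOn ℝ 1 h (Ioo (-1 : ℝ) 1)) :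
    ENNReal.ofReal A * ∫⁻ x in Ioo (-1 : ℝ) 1, ENNReal.ofReal (‖h x‖ ^ 2)
      ≤ 17 * ∫⁻ x in Ioo (-1 : ℝ) 1,
          (ENNReal.ofReal (‖deriv h x‖ ^ 2) + ENNReal.ofReal (A ^ 2 * x ^ 2 * ‖h x‖ ^ 2)) := by
  have hA0 : (0:ℝ) < A := by linarith
  have hsq3 : (3:ℝ) ≤ Real.sqrt A := by
    have : Real.sqrt 9 ≤ Real.sqrt A := Real.sqrt_le_sqrt hA
    rwa [show (9:ℝ) = 3^2 by norm_num, Real.sqrt_sq (by norm_num : (0:ℝ) ≤ 3)] at this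
  set δ : ℝ := (Real.sqrt A)⁻¹ with hδdef
  have hδpos : 0 < δ := inv_pos.2 (Real.sqrt_pos.2 hA0)
  have hδ3 : δ ≤ 1/3 := by
    rw [hδdef, show (1:ℝ)/3 = 3⁻¹ by norm_num]
    exact inv_anti₀ (by norm_num) hsq3
  have hδ2 : δ ^ 2 = A⁻¹ := by
    rw [hδdef, inv_pow, Real.sq_sqrt hA0.le]
  have hAδ2 : A * δ ^ 2 = 1 := by rw [hδ2]; field_simp
  clear_value δ
  clear hδdef
  have hsub : Icc (-δ) (2*δ) ⊆ Ioo (-1 : ℝ) 1 := by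
    intro z hz
    constructor <;> [nlinarith [hz.1]; nlinarith [hz.2]]
  have hδδ : δ ≤ 2*δ := by linarith
  have hmδδ : -δ ≤ 2*δ := by linarith
  -- continuity facts
  have hcont : ContinuousOn h (Ioo (-1:ℝ) 1) := hh.continuousOn
  have hdcont : ContinuousOn (deriv h) (Ioo (-1:ℝ) 1) :=
    hh.continuousOn_deriv_of_isOpen isOpen_Ioo le_rfl
  have hder : ∀ x ∈ Ioo (-1:ℝ) 1, HasDerivAt h (deriv h x) x := fun x hx =>
    (((hh.differentiableOn one_ne_zero) x hx).differentiableAt (isOpen_Ioo.mem_nhds hx)).hasDerivAt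
  have hfm : Measurable fun t => ‖deriv h t‖ := (measurable_deriv h).norm
  set I : ℝ := ∫ t in (-δ)..(2*δ), ‖deriv h t‖^2 with hIdef
  set P : ℝ := ∫ y in δ..(2*δ), y^2*‖h y‖^2 with hPdef
  have hI_int : IntervalIntegrable (fun t => ‖deriv h t‖^2) volume (-δ) (2*δ) := by
    apply ContinuousOn.intervalIntegrable
    exact ((hdcont.mono (fun z hz => hsub (by rwa [uIcc_of_le hmδδ] at hz))).norm.pow 2)
  have hI0 : 0 ≤ I := intervalIntegral.integral_nonneg hmδδ (fun t _ => sq_nonneg _)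
  have hQ_int : IntervalIntegrable (fun y => ‖h y‖^2) volume δ (2*δ) := by
    apply ContinuousOn.intervalIntegrable
    have : uIcc δ (2*δ) ⊆ Ioo (-1:ℝ) 1 := by
      rw [uIcc_of_le hδδ]
      exact fun z hz => hsub ⟨by linarith [hz.1, hδpos.le], hz.2⟩
    exact (hcont.mono this).norm.pow 2
  have hP_int : IntervalIntegrable (fun y => y^2*‖h y‖^2) volume δ (2*δ) := by
    apply ContinuousOn.intervalIntegrable
    have : uIcc δ (2*δ) ⊆ Ioo (-1:ℝ) 1 := by
      rw [uIcc_of_le hδδ]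
      exact fun z hz => hsub ⟨by linarith [hz.1, hδpos.le], hz.2⟩
    exact ((continuousOn_pow 2).mul ((hcont.mono this).norm.pow 2))
  have hP0 : 0 ≤ P :=
    intervalIntegral.integral_nonneg hδδ (fun t _ => mul_nonneg (sq_nonneg _) (sq_nonneg _))
  -- Step A
  have key : ∀ x ∈ Icc (-δ) δ, ∀ y ∈ Icc δ (2*δ),
      ‖h x‖^2 ≤ 2*‖h y‖^2 + 6*δ*I := by
    intro x hx y hy
    have hxy : x ≤ y := hx.2.trans hy.1
    have hIccsub : Icc x y ⊆ Ioo (-1:ℝ) 1 :=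
      fun t ht => hsub (Icc_subset_Icc hx.1 hy.2 ht)
    have huIcc : uIcc x y ⊆ Ioo (-1:ℝ) 1 := by rw [uIcc_of_le hxy]; exact hIccsub
    have ftc : ∫ t in x..y, deriv h t = h y - h x :=
      intervalIntegral.integral_eq_sub_of_hasDerivAt (fun t ht => hder t (huIcc ht))
        ((hdcont.mono huIcc).intervalIntegrable)
    set J : ℝ := ∫ t in x..y, ‖deriv h t‖ with hJdef
    have hJ0 : 0 ≤ J := intervalIntegral.integral_nonneg hxy (fun t _ => norm_nonneg _)
    have n1 : ‖h x‖ ≤ ‖h y‖ + J := by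
      have e1 : ‖h x‖ ≤ ‖h y‖ + ‖h y - h x‖ := by
        calc ‖h x‖ = ‖h y - (h y - h x)‖ := by congr 1; ring
          _ ≤ ‖h y‖ + ‖h y - h x‖ := norm_sub_le _ _
      have e2 : ‖h y - h x‖ ≤ J := by
        rw [← ftc]; exact intervalIntegral.norm_integral_le_integral_norm hxy
      linarith
    have cs : J^2 ≤ (y - x) * ∫ t in x..y, ‖deriv h t‖^2 := by
      refine cs_aux hxy ((hdcont.mono (hIccsub)).norm) hfm (fun t => norm_nonneg _)
    have hmono : ∫ t in x..y, ‖deriv h t‖^2 ≤ I := by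
      apply intervalIntegral.integral_mono_interval hx.1 hxy hy.2
        (ae_of_all _ (fun t => sq_nonneg _)) hI_int
    have hyx3 : y - x ≤ 3*δ := by
      have := hx.1; have := hy.2; linarith
    have hsq_int0 : 0 ≤ ∫ t in x..y, ‖deriv h t‖^2 :=
      intervalIntegral.integral_nonneg hxy (fun t _ => sq_nonneg _)
    nlinarith [sq_nonneg (‖h y‖ - J), norm_nonneg (h x), norm_nonneg (h y),
      mul_le_mul_of_nonneg_left hmono (by linarith : (0:ℝ) ≤ y - x),
      mul_le_mul_of_nonneg_right hyx3 hI0]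
  -- Step B
  set K : ℝ := (2/δ^3) * P + 6*δ*I with hKdef
  have hK0 : 0 ≤ K := by
    have : 0 < δ^3 := by positivity
    have h1 : 0 ≤ (2/δ^3) * P := mul_nonneg (by positivity) hP0
    have h2 : 0 ≤ 6*δ*I := mul_nonneg (by positivity) hI0
    rw [hKdef]; linarith
  have keyB : ∀ x ∈ Icc (-δ) δ, ‖h x‖^2 ≤ K := by
    intro x hx
    have mono1 : ∫ _y in δ..(2*δ), ‖h x‖^2 ≤ ∫ y in δ..(2*δ), (2*‖h y‖^2 + 6*δ*I) := by
      apply intervalIntegral.integral_mono_on hδδ intervalIntegrable_const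
        ((hQ_int.const_mul 2).add intervalIntegrable_const)
        (fun y hy => key x hx y hy)
    rw [intervalIntegral.integral_const, smul_eq_mul,
      intervalIntegral.integral_add (hQ_int.const_mul 2) intervalIntegrable_const,
      intervalIntegral.integral_const_mul, intervalIntegral.integral_const, smul_eq_mul] at mono1
    have step2 : (∫ y in δ..(2*δ), ‖h y‖^2) ≤ (1/δ^2) * P := by
      rw [hPdef, ← intervalIntegral.integral_const_mul]
      apply intervalIntegral.integral_mono_on hδδ hQ_int (hP_int.const_mul _)
      intro y hy
      have h1 : δ ≤ y := hy.1
      have h2 : δ^2 ≤ y^2 := by nlinarith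
      rw [div_mul_eq_mul_div, one_mul, le_div_iff₀ (by positivity)]
      nlinarith [sq_nonneg (‖h y‖)]
    have hδK : δ * ‖h x‖^2 ≤ δ * K := by
      have hKeq : δ * K = 2 * ((1/δ^2) * P) + (2*δ - δ) * (6*δ*I) := by
        rw [hKdef]; field_simp; ring
      rw [hKeq]
      calc δ * ‖h x‖^2 = (2*δ - δ) * ‖h x‖^2 := by ring
        _ ≤ 2 * (∫ y in δ..(2*δ), ‖h y‖^2) + (2*δ - δ) * (6*δ*I) := mono1
        _ ≤ 2 * ((1/δ^2) * P) + (2*δ - δ) * (6*δ*I) := by nlinarith [step2]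
    exact (mul_le_mul_iff_right₀ hδpos).mp hδK
  -- abbreviation for RHS lintegral
  have hmidsub : Ioo (-δ) δ ⊆ Ioo (-1:ℝ) 1 :=
    fun z hz => hsub ⟨hz.1.le, by linarith [hz.2.le]⟩
  have hIocsubI : Ioc (-δ) (2*δ) ⊆ Ioo (-1:ℝ) 1 :=
    fun z hz => hsub ⟨hz.1.le, hz.2⟩
  have hIocsubP : Ioc δ (2*δ) ⊆ Ioo (-1:ℝ) 1 :=
    fun z hz => hsub ⟨by linarith [hz.1.le, hδpos.le], hz.2⟩
  have hIccsubP : Icc δ (2*δ) ⊆ Ioo (-1:ℝ) 1 :=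
    fun z hz => hsub ⟨by linarith [hz.1, hδpos.le], hz.2⟩
  have hIccsubI : Icc (-δ) (2*δ) ⊆ Ioo (-1:ℝ) 1 := hsub
  have hmid : ∫⁻ x in Ioo (-δ) δ, ENNReal.ofReal (‖h x‖^2)
      ≤ ENNReal.ofReal K * ENNReal.ofReal (2*δ) := by
    calc ∫⁻ x in Ioo (-δ) δ, ENNReal.ofReal (‖h x‖^2)
        ≤ ∫⁻ _x in Ioo (-δ) δ, ENNReal.ofReal K :=
          setLIntegral_mono measurable_const
            (fun x hx => ENNReal.ofReal_le_ofReal (keyB x (Ioo_subset_Icc_self hx)))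
      _ = ENNReal.ofReal K * volume (Ioo (-δ) δ) := setLIntegral_const _ _
      _ = ENNReal.ofReal K * ENNReal.ofReal (2*δ) := by
          rw [Real.volume_Ioo]; congr 1; ring
  have hRP : ENNReal.ofReal (A^2*P)
      ≤ ∫⁻ x in Ioo (-1:ℝ) 1,
          (ENNReal.ofReal (‖deriv h x‖ ^ 2) + ENNReal.ofReal (A ^ 2 * x ^ 2 * ‖h x‖ ^ 2)) := by
    have hint : IntegrableOn (fun y => A^2*y^2*‖h y‖^2) (Ioc δ (2*δ)) := by
      refine IntegrableOn.mono_set ?_ (Ioc_subset_Icc_self)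
      apply ContinuousOn.integrableOn_Icc
      exact (continuousOn_const.mul (continuousOn_pow 2)).mul ((hcont.mono hIccsubP).norm.pow 2)
    have e : A^2*P = ∫ y in Ioc δ (2*δ), A^2*y^2*‖h y‖^2 := by
      rw [hPdef, ← intervalIntegral.integral_const_mul, intervalIntegral.integral_of_le hδδ]
      congr 1; ext y; ring
    rw [e, MeasureTheory.ofReal_integral_eq_lintegral_ofReal hint
      (ae_of_all _ (fun y => by positivity))]
    calc ∫⁻ y in Ioc δ (2*δ), ENNReal.ofReal (A^2*y^2*‖h y‖^2)
        ≤ ∫⁻ y in Ioc δ (2*δ),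
            (ENNReal.ofReal (‖deriv h y‖ ^ 2) + ENNReal.ofReal (A ^ 2 * y ^ 2 * ‖h y‖ ^ 2)) :=
          lintegral_mono (fun y => le_add_self)
      _ ≤ _ := lintegral_mono_set hIocsubP
  have hRI : ENNReal.ofReal I
      ≤ ∫⁻ x in Ioo (-1:ℝ) 1,
          (ENNReal.ofReal (‖deriv h x‖ ^ 2) + ENNReal.ofReal (A ^ 2 * x ^ 2 * ‖h x‖ ^ 2)) := by
    have hint : IntegrableOn (fun t => ‖deriv h t‖^2) (Ioc (-δ) (2*δ)) := by
      refine IntegrableOn.mono_set ?_ (Ioc_subset_Icc_self)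
      apply ContinuousOn.integrableOn_Icc
      exact (hdcont.mono hIccsubI).norm.pow 2
    have e : I = ∫ t in Ioc (-δ) (2*δ), ‖deriv h t‖^2 := by
      rw [hIdef, intervalIntegral.integral_of_le hmδδ]
    rw [e, MeasureTheory.ofReal_integral_eq_lintegral_ofReal hint
      (ae_of_all _ (fun t => sq_nonneg _))]
    calc ∫⁻ t in Ioc (-δ) (2*δ), ENNReal.ofReal (‖deriv h t‖^2)
        ≤ ∫⁻ t in Ioc (-δ) (2*δ),
            (ENNReal.ofReal (‖deriv h t‖ ^ 2) + ENNReal.ofReal (A ^ 2 * t ^ 2 * ‖h t‖ ^ 2)) :=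
          lintegral_mono (fun t => le_self_add)
      _ ≤ _ := lintegral_mono_set hIocsubI
  have hmid2 : ENNReal.ofReal A * (ENNReal.ofReal K * ENNReal.ofReal (2*δ))
      ≤ 16 * ∫⁻ x in Ioo (-1:ℝ) 1,
          (ENNReal.ofReal (‖deriv h x‖ ^ 2) + ENNReal.ofReal (A ^ 2 * x ^ 2 * ‖h x‖ ^ 2)) := by
    have hid : A * (K * (2*δ)) = 4*(A^2*P) + 12*I := by
      have hAeq : A = (δ^2)⁻¹ := by rw [hδ2, inv_inv]
      rw [hKdef, hAeq]
      exact arith_aux hδpos.ne'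
    rw [← ENNReal.ofReal_mul hK0, ← ENNReal.ofReal_mul hA0.le, hid]
    calc ENNReal.ofReal (4*(A^2*P) + 12*I)
        ≤ ENNReal.ofReal (4*(A^2*P)) + ENNReal.ofReal (12*I) := ENNReal.ofReal_add_le
      _ = 4 * ENNReal.ofReal (A^2*P) + 12 * ENNReal.ofReal I := by
          rw [ENNReal.ofReal_mul (by norm_num : (0:ℝ) ≤ 4),
            ENNReal.ofReal_mul (by norm_num : (0:ℝ) ≤ 12)]
          norm_num
      _ ≤ 4 * (∫⁻ x in Ioo (-1:ℝ) 1,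
            (ENNReal.ofReal (‖deriv h x‖ ^ 2) + ENNReal.ofReal (A ^ 2 * x ^ 2 * ‖h x‖ ^ 2)))
          + 12 * (∫⁻ x in Ioo (-1:ℝ) 1,
            (ENNReal.ofReal (‖deriv h x‖ ^ 2) + ENNReal.ofReal (A ^ 2 * x ^ 2 * ‖h x‖ ^ 2))) :=
          add_le_add (mul_le_mul_right hRP 4) (mul_le_mul_right hRI 12)
      _ = _ := by rw [← add_mul]; norm_num
  have hTmeas : MeasurableSet ((Ioo (-δ) δ)ᶜ ∩ Ioo (-1:ℝ) 1) :=
    measurableSet_Ioo.compl.inter measurableSet_Ioo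
  have houter : ENNReal.ofReal A *
      ∫⁻ x in (Ioo (-δ) δ)ᶜ ∩ Ioo (-1:ℝ) 1, ENNReal.ofReal (‖h x‖^2)
      ≤ ∫⁻ x in Ioo (-1:ℝ) 1,
          (ENNReal.ofReal (‖deriv h x‖ ^ 2) + ENNReal.ofReal (A ^ 2 * x ^ 2 * ‖h x‖ ^ 2)) := by
    calc ENNReal.ofReal A *
        ∫⁻ x in (Ioo (-δ) δ)ᶜ ∩ Ioo (-1:ℝ) 1, ENNReal.ofReal (‖h x‖^2)
        ≤ ∫⁻ x in (Ioo (-δ) δ)ᶜ ∩ Ioo (-1:ℝ) 1,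
            ENNReal.ofReal A * ENNReal.ofReal (‖h x‖^2) := lintegral_const_mul_le _ _
      _ ≤ ∫⁻ x in (Ioo (-δ) δ)ᶜ ∩ Ioo (-1:ℝ) 1,
            (ENNReal.ofReal (‖deriv h x‖ ^ 2) + ENNReal.ofReal (A ^ 2 * x ^ 2 * ‖h x‖ ^ 2)) := by
          apply lintegral_mono_ae
          filter_upwards [ae_restrict_mem hTmeas] with x hx
          obtain ⟨hx1, _hx2⟩ := hx
          have hx1' : x ≤ -δ ∨ δ ≤ x := by
            simp only [mem_compl_iff, mem_Ioo, not_and_or, not_lt] at hx1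
            rcases hx1 with h1 | h2
            · left; linarith
            · right; exact h2
          have hxsq : δ^2 ≤ x^2 := by
            rcases hx1' with h1 | h2
            · nlinarith
            · nlinarith
          rw [← ENNReal.ofReal_mul hA0.le]
          refine le_trans (ENNReal.ofReal_le_ofReal ?_) le_add_self
          have e : A^2*δ^2 = A := by
            calc A^2*δ^2 = A*(A*δ^2) := by ring
              _ = A := by rw [hAδ2]; ring
          have hAx : A ≤ A^2*x^2 := by
            nlinarith [mul_le_mul_of_nonneg_left hxsq (sq_nonneg A)]
          nlinarith [hAx, sq_nonneg (‖h x‖)]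
      _ ≤ _ := lintegral_mono_set inter_subset_right
  have hsplit := lintegral_add_compl (μ := volume.restrict (Ioo (-1:ℝ) 1))
    (fun x => ENNReal.ofReal (‖h x‖^2)) (measurableSet_Ioo (a := -δ) (b := δ))
  have r1 : (volume.restrict (Ioo (-1:ℝ) 1)).restrict (Ioo (-δ) δ)
      = volume.restrict (Ioo (-δ) δ) := by
    rw [Measure.restrict_restrict measurableSet_Ioo, inter_eq_left.mpr hmidsub]
  have r2 : (volume.restrict (Ioo (-1:ℝ) 1)).restrict ((Ioo (-δ) δ)ᶜ)
      = volume.restrict ((Ioo (-δ) δ)ᶜ ∩ Ioo (-1:ℝ) 1) :=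
    Measure.restrict_restrict measurableSet_Ioo.compl
  rw [← hsplit, r1, r2, mul_add]
  calc (ENNReal.ofReal A * ∫⁻ x in Ioo (-δ) δ, ENNReal.ofReal (‖h x‖^2))
      + (ENNReal.ofReal A * ∫⁻ x in (Ioo (-δ) δ)ᶜ ∩ Ioo (-1:ℝ) 1, ENNReal.ofReal (‖h x‖^2))
      ≤ 16 * (∫⁻ x in Ioo (-1:ℝ) 1,
          (ENNReal.ofReal (‖deriv h x‖ ^ 2) + ENNReal.ofReal (A ^ 2 * x ^ 2 * ‖h x‖ ^ 2)))
        + ∫⁻ x in Ioo (-1:ℝ) 1,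
          (ENNReal.ofReal (‖deriv h x‖ ^ 2) + ENNReal.ofReal (A ^ 2 * x ^ 2 * ‖h x‖ ^ 2)) :=
        add_le_add (le_trans (mul_le_mul_right hmid _) hmid2) houter
    _ = 17 * ∫⁻ x in Ioo (-1:ℝ) 1,
          (ENNReal.ofReal (‖deriv h x‖ ^ 2) + ENNReal.ofReal (A ^ 2 * x ^ 2 * ‖h x‖ ^ 2)) := by
        rw [(show (17:ℝ≥0∞) = 16 + 1 by norm_num), add_mul, one_mul]


/-- Interpolation/Hardy-type inequality: there is a universal constant `C > 0` such that
for every `A ≥ 1` and every `C¹` function `h : (−1,1) → ℂ`,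
`A·∫|h|² ≤ C·∫(|h'|² + A²x²|h|²)`, the inequality being stated with extended-real
(lower Lebesgue) integrals so that it is trivially valid when the right-hand side is
infinite. -/
theorem statement1 :
    ∃ C : ℝ, 0 < C ∧
      ∀ A : ℝ, 1 ≤ A → ∀ h : ℝ → ℂ, ContDiffOn ℝ 1 h (Set.Ioo (-1 : ℝ) 1) →
        ENNReal.ofReal A * ∫⁻ x in Set.Ioo (-1 : ℝ) 1, ENNReal.ofReal (‖h x‖ ^ 2)
          ≤ ENNReal.ofReal C *
            ∫⁻ x in Set.Ioo (-1 : ℝ) 1,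
              (ENNReal.ofReal (‖deriv h x‖ ^ 2)
                + ENNReal.ofReal (A ^ 2 * x ^ 2 * ‖h x‖ ^ 2)) := by
  refine ⟨1377, by norm_num, ?_⟩
  intro A hA h hh
  have hB : (9:ℝ) ≤ 9*A := by linarith
  have hcore := core hB h hh
  have hpt : ∀ x : ℝ, (ENNReal.ofReal (‖deriv h x‖^2)
      + ENNReal.ofReal ((9*A)^2 * x^2 * ‖h x‖^2))
      ≤ 81 * (ENNReal.ofReal (‖deriv h x‖^2) + ENNReal.ofReal (A^2 * x^2 * ‖h x‖^2)) := by
    intro x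
    have e : (9*A)^2 * x^2 * ‖h x‖^2 = 81 * (A^2*x^2*‖h x‖^2) := by ring
    rw [e, ENNReal.ofReal_mul (by norm_num : (0:ℝ) ≤ 81), mul_add]
    have h81 : ENNReal.ofReal (81:ℝ) = (81:ℝ≥0∞) := by
      norm_num
    rw [h81]
    exact add_le_add (le_mul_of_one_le_left zero_le (by norm_num)) le_rfl
  calc ENNReal.ofReal A * ∫⁻ x in Set.Ioo (-1:ℝ) 1, ENNReal.ofReal (‖h x‖^2)
      ≤ ENNReal.ofReal (9*A) * ∫⁻ x in Set.Ioo (-1:ℝ) 1, ENNReal.ofReal (‖h x‖^2) :=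
        mul_le_mul_left (ENNReal.ofReal_le_ofReal (by linarith)) _
    _ ≤ 17 * ∫⁻ x in Set.Ioo (-1:ℝ) 1,
        (ENNReal.ofReal (‖deriv h x‖^2) + ENNReal.ofReal ((9*A)^2 * x^2 * ‖h x‖^2)) := hcore
    _ ≤ 17 * ∫⁻ x in Set.Ioo (-1:ℝ) 1,
        (81 * (ENNReal.ofReal (‖deriv h x‖^2) + ENNReal.ofReal (A^2 * x^2 * ‖h x‖^2))) :=
        mul_le_mul_right (lintegral_mono hpt) _
    _ = 17 * (81 * ∫⁻ x in Set.Ioo (-1:ℝ) 1,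
        (ENNReal.ofReal (‖deriv h x‖^2) + ENNReal.ofReal (A^2 * x^2 * ‖h x‖^2))) := by
        rw [lintegral_const_mul' _ _ (by norm_num)]
    _ = ENNReal.ofReal (1377:ℝ) * ∫⁻ x in Set.Ioo (-1:ℝ) 1,
        (ENNReal.ofReal (‖deriv h x‖^2) + ENNReal.ofReal (A^2 * x^2 * ‖h x‖^2)) := by
        rw [← mul_assoc]
        norm_num
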